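/- Let S be a bounded selfadjoint operator on a complex Hilbert space K with Sp(S) ⊆ [r, R], r < R, and f : [r, R] → ℝ continuous convex. Then for every unit vector x ∈ K, ⟨f(S) x, x⟩ − f(⟨S x, x⟩) ≤ 2[ (f(r) + f(R))/2 − f((r+R)/2) ]. -/

import Mathlib

open scoped InnerProductSpace

private lemma chord_bound (r R : ℝ) (hrR : r < R) (f : ℝ → ℝ)
    (hf : ConvexOn ℝ (Set.Icc r R) f) {t : ℝ} (ht : t ∈ Set.Icc r R) :
    f t ≤ ((R - t) * f r + (t - r) * f R) / (R - r) := by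
  obtain ⟨ht1, ht2⟩ := ht
  have hD : (0:ℝ) < R - r := by linarith
  have ha' : (0:ℝ) ≤ (R - t)/(R - r) := div_nonneg (by linarith) (by linarith)
  have hb' : (0:ℝ) ≤ (t - r)/(R - r) := div_nonneg (by linarith) (by linarith)
  have hab' : (R - t)/(R - r) + (t - r)/(R - r) = 1 := by field_simp; ring
  have h := hf.2 ⟨le_rfl, hrR.le⟩ ⟨hrR.le, le_rfl⟩ ha' hb' hab'
  have he : (R - t)/(R - r) * r + (t - r)/(R - r) * R = t := by field_simp; ring
  rw [smul_eq_mul, smul_eq_mul, smul_eq_mul, smul_eq_mul, he] at h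
  calc f t ≤ (R - t)/(R - r) * f r + (t - r)/(R - r) * f R := h
    _ = ((R - t) * f r + (t - r) * f R) / (R - r) := by ring

private lemma chord_defect_le (r R : ℝ) (hrR : r < R) (f : ℝ → ℝ)
    (hf : ConvexOn ℝ (Set.Icc r R) f) {m : ℝ} (hm : m ∈ Set.Icc r R) :
    ((R - m) * f r + (m - r) * f R) / (R - r) - f m ≤
      2 * ((f r + f R) / 2 - f ((r + R) / 2)) := by
  obtain ⟨hm1, hm2⟩ := hm
  have hD : (0:ℝ) < R - r := by linarith
  have hchord := chord_bound r R hrR f hf ⟨hm1, hm2⟩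
  have hg0 : 0 ≤ ((R - m) * f r + (m - r) * f R) / (R - r) - f m := by linarith
  rcases le_total m ((r + R)/2) with hc | hc
  · have hRm : (0:ℝ) < R - m := by linarith
    set l : ℝ := (R - r) / (2 * (R - m)) with hl
    have hl2 : 1/2 ≤ l := by rw [hl, le_div_iff₀ (by linarith)]; nlinarith
    have hl1 : l ≤ 1 := by rw [hl, div_le_one (by linarith)]; linarith
    have hcomb : l * m + (1 - l) * R = (r + R)/2 := by rw [hl]; field_simp; ring
    have ha' : (0:ℝ) ≤ l := by linarith
    have hb' : (0:ℝ) ≤ 1 - l := by linarith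
    have hab' : l + (1 - l) = 1 := by ring
    have h := hf.2 ⟨hm1, hm2⟩ ⟨hrR.le, le_rfl⟩ ha' hb' hab'
    rw [smul_eq_mul, smul_eq_mul, smul_eq_mul, smul_eq_mul, hcomb] at h
    have hLaff : (f r + f R)/2
        = l * (((R - m) * f r + (m - r) * f R)/(R - r)) + (1 - l) * f R := by
      rw [hl]; field_simp; ring
    have hkey : l * (((R - m) * f r + (m - r) * f R)/(R - r) - f m)
        ≤ (f r + f R)/2 - f ((r + R)/2) := by nlinarith [hLaff, h]
    nlinarith [mul_le_mul_of_nonneg_right hl2 hg0]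
  · have hRm : (0:ℝ) < m - r := by linarith
    set l : ℝ := (R - r) / (2 * (m - r)) with hl
    have hl2 : 1/2 ≤ l := by rw [hl, le_div_iff₀ (by linarith)]; nlinarith
    have hl1 : l ≤ 1 := by rw [hl, div_le_one (by linarith)]; linarith
    have hcomb : l * m + (1 - l) * r = (r + R)/2 := by rw [hl]; field_simp; ring
    have ha' : (0:ℝ) ≤ l := by linarith
    have hb' : (0:ℝ) ≤ 1 - l := by linarith
    have hab' : l + (1 - l) = 1 := by ring
    have h := hf.2 ⟨hm1, hm2⟩ ⟨le_rfl, hrR.le⟩ ha' hb' hab'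
    rw [smul_eq_mul, smul_eq_mul, smul_eq_mul, smul_eq_mul, hcomb] at h
    have hLaff : (f r + f R)/2
        = l * (((R - m) * f r + (m - r) * f R)/(R - r)) + (1 - l) * f r := by
      rw [hl]; field_simp; ring
    have hkey : l * (((R - m) * f r + (m - r) * f R)/(R - r) - f m)
        ≤ (f r + f R)/2 - f ((r + R)/2) := by nlinarith [hLaff, h]
    nlinarith [mul_le_mul_of_nonneg_right hl2 hg0]

private lemma inner_re_le_of_le {K : Type*} [NormedAddCommGroup K] [InnerProductSpace ℂ K]
    [CompleteSpace K] {A B : K →L[ℂ] K} (h : A ≤ B) (x : K) :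
    (⟪A x, x⟫_ℂ).re ≤ (⟪B x, x⟫_ℂ).re := by
  have h' := ((ContinuousLinearMap.le_def A B).mp h).inner_nonneg_left x
  simp only [ContinuousLinearMap.sub_apply, inner_sub_left, map_sub,
    RCLike.re_to_complex, Complex.sub_re] at h'
  have h'' := (Complex.le_def.mp h').1
  simp only [Complex.zero_re, Complex.sub_re] at h''
  linarith

theorem cfc_jensen_defect_midpoint_bound
    {K : Type*} [NormedAddCommGroup K] [InnerProductSpace ℂ K] [CompleteSpace K]
    (S : K →L[ℂ] K) (hS : IsSelfAdjoint S) (r R : ℝ) (hrR : r < R)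
    (hspec : spectrum ℝ S ⊆ Set.Icc r R)
    (f : ℝ → ℝ) (hfc : ContinuousOn f (Set.Icc r R))
    (hf : ConvexOn ℝ (Set.Icc r R) f)
    (x : K) (hx : ‖x‖ = 1) :
    (⟪(cfc f S) x, x⟫_ℂ).re - f ((⟪S x, x⟫_ℂ).re) ≤
      2 * ((f r + f R) / 2 - f ((r + R) / 2)) := by
  have hD : (0:ℝ) < R - r := by linarith
  have hfs : ContinuousOn f (spectrum ℝ S) := hfc.mono hspec
  set m : ℝ := (⟪S x, x⟫_ℂ).re with hmdef
  have hxx : ⟪x, x⟫_ℂ = 1 := by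
    rw [inner_self_eq_norm_sq_to_K, hx]; norm_num
  have hs : ∀ (y : K) (c : ℝ), ⟪c • y, x⟫_ℂ = (c : ℂ) * ⟪y, x⟫_ℂ := by
    intro y c
    rw [← algebraMap_smul ℂ c y, Complex.coe_algebraMap, inner_smul_left, Complex.conj_ofReal]
  -- m ∈ [r, R]
  have halg : ∀ c : ℝ, (⟪(algebraMap ℝ (K →L[ℂ] K) c) x, x⟫_ℂ).re = c := by
    intro c
    rw [Algebra.algebraMap_eq_smul_one]
    simp only [ContinuousLinearMap.smul_apply, ContinuousLinearMap.one_apply, hs, hxx,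
      mul_one, Complex.ofReal_re]
  have hmR : m ≤ R := by
    have hle : S ≤ algebraMap ℝ (K →L[ℂ] K) R := by
      calc S = cfc (fun t : ℝ => t) S := (cfc_id' ℝ S).symm
        _ ≤ cfc (fun _ : ℝ => R) S := cfc_mono (fun t ht => (hspec ht).2)
        _ = algebraMap ℝ (K →L[ℂ] K) R := cfc_const R S
    have := inner_re_le_of_le hle x
    rwa [halg R] at this
  have hrm : r ≤ m := by
    have hle : algebraMap ℝ (K →L[ℂ] K) r ≤ S := by
      calc algebraMap ℝ (K →L[ℂ] K) r = cfc (fun _ : ℝ => r) S := (cfc_const r S).symm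
        _ ≤ cfc (fun t : ℝ => t) S := cfc_mono (fun t ht => (hspec ht).1)
        _ = S := cfc_id' ℝ S
    have := inner_re_le_of_le hle x
    rwa [halg r] at this
  -- chord function
  set a : ℝ := (f R - f r) / (R - r) with ha
  set b : ℝ := f r - a * r with hb
  have hfg : ∀ t ∈ spectrum ℝ S, f t ≤ a * t + b := by
    intro t ht
    have h1 := chord_bound r R hrR f hf (hspec ht)
    have h2 : a * t + b = ((R - t) * f r + (t - r) * f R) / (R - r) := by
      rw [hb, ha]; field_simp; ring
    rw [h2]; exact h1
  have hcfc_le : cfc f S ≤ cfc (fun t : ℝ => a * t + b) S :=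
    cfc_mono hfg hfs (by fun_prop)
  have hcfcL : cfc (fun t : ℝ => a * t + b) S = a • S + algebraMap ℝ (K →L[ℂ] K) b := by
    calc cfc (fun t : ℝ => a * t + b) S
        = cfc (fun t : ℝ => a * t) S + cfc (fun _ : ℝ => b) S :=
          cfc_add S _ _ (by fun_prop) (by fun_prop)
      _ = a • cfc (fun t : ℝ => t) S + algebraMap ℝ (K →L[ℂ] K) b := by
          rw [cfc_const_mul a (fun t : ℝ => t) S (by fun_prop), cfc_const b S]
      _ = a • S + algebraMap ℝ (K →L[ℂ] K) b := by rw [cfc_id' ℝ S]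
  have h5 := inner_re_le_of_le hcfc_le x
  rw [hcfcL] at h5
  have h6 : (⟪(a • S + algebraMap ℝ (K →L[ℂ] K) b) x, x⟫_ℂ).re = a * m + b := by
    rw [Algebra.algebraMap_eq_smul_one]
    simp only [ContinuousLinearMap.add_apply, ContinuousLinearMap.smul_apply,
      ContinuousLinearMap.one_apply, inner_add_left, hs, hxx, mul_one,
      Complex.add_re, Complex.re_ofReal_mul, Complex.ofReal_re]
    rfl
  rw [h6] at h5
  have h7 : a * m + b = ((R - m) * f r + (m - r) * f R) / (R - r) := by
    rw [hb, ha]; field_simp; ring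
  have h8 := chord_defect_le r R hrR f hf ⟨hrm, hmR⟩
  linarith [h5, h7 ▸ h5]
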